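/- Let α, β ∈ ℂ and n ≥ 1. Every element of K_{n+1}(α,β) is a finite ℂ-linear combination of elements of the form ι(a)·b_nᵉ·ι(b), where a, b ∈ K_n(α,β), ε ∈ {0, 1, 2}, ι : K_n(α,β) → K_{n+1}(α,β) is the natural algebra map, and b_n denotes its class in K_{n+1}(α,β). Equivalently, the map K_n(α,β) ⊕ (K_n(α,β) ⊗_{K_{n−1}(α,β)} K_n(α,β)) ⊕ (K_n(α,β) ⊗_{K_{n−1}(α,β)} K_n(α,β)) → K_{n+1}(α,β) sending x ⊕ (y⊗z) ⊕ (u⊗v) to x + y·b_n·z + u·b_n²·v is surjective. -/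

import Mathlib

def braidRels (m : ℕ) : Set (FreeGroup (Fin m)) :=
  { r | (∃ i j : Fin m, (i : ℕ) + 1 < (j : ℕ) ∧
          r = FreeGroup.of i * FreeGroup.of j * (FreeGroup.of i)⁻¹ * (FreeGroup.of j)⁻¹) ∨
        (∃ i j : Fin m, (j : ℕ) = (i : ℕ) + 1 ∧
          r = FreeGroup.of i * FreeGroup.of j * FreeGroup.of i *
              (FreeGroup.of j * FreeGroup.of i * FreeGroup.of j)⁻¹) }

abbrev BraidGroup (n : ℕ) := PresentedGroup (braidRels (n - 1))

def braidGen (n : ℕ) (i : Fin (n - 1)) : BraidGroup n := PresentedGroup.of i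

theorem braid_mk_eq_one {m : ℕ} {r : FreeGroup (Fin m)} (hr : r ∈ braidRels m) :
    PresentedGroup.mk (braidRels m) r = 1 :=
  (QuotientGroup.eq_one_iff r).mpr (Subgroup.subset_normalClosure hr)

noncomputable def braidIncl (n : ℕ) : BraidGroup n →* BraidGroup (n + 1) :=
  PresentedGroup.toGroup
    (f := fun i => braidGen (n + 1) (Fin.castLE (by omega : n - 1 ≤ n + 1 - 1) i))
    (by
      rintro r (⟨i, j, hij, rfl⟩ | ⟨i, j, hij, rfl⟩)
      · have h1 := braid_mk_eq_one (m := n + 1 - 1)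
          (Or.inl ⟨Fin.castLE (by omega) i, Fin.castLE (by omega) j, by simpa using hij, rfl⟩)
        simp only [map_mul, map_inv, FreeGroup.lift_apply_of] at h1 ⊢
        exact h1
      · have h1 := braid_mk_eq_one (m := n + 1 - 1)
          (Or.inr ⟨Fin.castLE (by omega) i, Fin.castLE (by omega) j, by simpa using hij, rfl⟩)
        simp only [map_mul, map_inv, FreeGroup.lift_apply_of] at h1 ⊢
        exact h1)

theorem braidIncl_gen (n : ℕ) (i : Fin (n - 1)) :
    braidIncl n (braidGen n i) = braidGen (n + 1) (Fin.castLE (by omega) i) :=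
  PresentedGroup.toGroup.of _

variable (R : Type) [CommRing R]

noncomputable def gb (n : ℕ) (i : Fin (n - 1)) : MonoidAlgebra R (BraidGroup n) :=
  MonoidAlgebra.of R (BraidGroup n) (braidGen n i)

inductive cubicRel (α β : R) (n : ℕ) :
    MonoidAlgebra R (BraidGroup n) → MonoidAlgebra R (BraidGroup n) → Prop
  | cube (i : Fin (n - 1)) :
      cubicRel α β n (gb R n i ^ 3) (α • gb R n i ^ 2 + β • gb R n i + 1)

abbrev CubicHecke (α β : R) (n : ℕ) := RingQuot (cubicRel R α β n)

noncomputable def hb (α β : R) (n : ℕ) (i : Fin (n - 1)) : CubicHecke R α β n :=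
  RingQuot.mkAlgHom R (cubicRel R α β n) (gb R n i)

theorem mapDomain_gb (n : ℕ) (i : Fin (n - 1)) :
    (MonoidAlgebra.mapDomainAlgHom R R (braidIncl n)) (gb R n i)
      = gb R (n + 1) (Fin.castLE (by omega) i) := by
  simp only [gb, MonoidAlgebra.mapDomainAlgHom_apply, MonoidAlgebra.of_apply,
    Finsupp.mapDomain_single, MonoidAlgebra.mapDomain_single, braidIncl_gen]

noncomputable def heckeIncl (α β : R) (n : ℕ) :
    CubicHecke R α β n →ₐ[R] CubicHecke R α β (n + 1) :=
  RingQuot.liftAlgHom R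
    ⟨(RingQuot.mkAlgHom R (cubicRel R α β (n + 1))).comp
        (MonoidAlgebra.mapDomainAlgHom R R (braidIncl n)),
      by
        rintro x y ⟨i⟩
        have h2 : (MonoidAlgebra.mapDomainAlgHom R R (braidIncl n)) (gb R n i ^ 3)
            = gb R (n + 1) (Fin.castLE (by omega) i) ^ 3 := by
          rw [map_pow, mapDomain_gb]
        have h3 : (MonoidAlgebra.mapDomainAlgHom R R (braidIncl n))
              (α • gb R n i ^ 2 + β • gb R n i + 1)
            = α • gb R (n + 1) (Fin.castLE (by omega) i) ^ 2
              + β • gb R (n + 1) (Fin.castLE (by omega) i) + 1 := by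
          rw [map_add, map_add, map_smul, map_smul, map_pow, map_one, mapDomain_gb]
        simp only [AlgHom.comp_apply, h2, h3]
        exact RingQuot.mkAlgHom_rel R (cubicRel.cube _)⟩

theorem heckeIncl_gen (α β : R) (n : ℕ) (i : Fin (n - 1)) :
    heckeIncl R α β n (hb R α β n i) = hb R α β (n + 1) (Fin.castLE (by omega) i) := by
  simp only [heckeIncl, hb, RingQuot.liftAlgHom_mkAlgHom_apply, AlgHom.comp_apply, mapDomain_gb]

noncomputable def R0elt {A : Type*} [Ring A] [Algebra R A] (α β : R) (x y : A) : A :=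
  y * x ^ 2 * y
  + (β ^ 2 - α) • (x ^ 2 * y ^ 2 * x ^ 2)
  + (α ^ 2 - α * β ^ 2 - β) • (x * y ^ 2 * x ^ 2 + x ^ 2 * y ^ 2 * x)
  + (α ^ 2 - α * β ^ 2) • (x ^ 2 * y * x ^ 2)
  + (1 + 2 * α * β + α ^ 2 * β ^ 2 - α ^ 3) • (x * y ^ 2 * x)
  + (1 + α * β + α ^ 2 * β ^ 2 - α ^ 3) • (x * y * x ^ 2 + x ^ 2 * y * x)
  + (1 + 2 * α * β - β ^ 3) • (y ^ 2 * x ^ 2 + x ^ 2 * y ^ 2)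
  + (α * β ^ 3 - 2 * α - 2 * α ^ 2 * β) • (y * x ^ 2 + x ^ 2 * y)
  + (α * β ^ 3 - 2 * α - 2 * α ^ 2 * β + β ^ 2) • (y ^ 2 * x + x * y ^ 2)
  + (α ^ 4 - α ^ 3 * β ^ 2 - 2 * α ^ 2 * β - 3 * α) • (x * y * x)
  + (2 * α ^ 3 * β + 3 * α ^ 2 - α ^ 2 * β ^ 3 - α * β ^ 2) • (y * x + x * y)
  + (β ^ 4 - 2 * β - 3 * α * β ^ 2 + α ^ 2) • (x ^ 2 + y ^ 2)
  + (1 + 4 * α * β + 3 * α ^ 2 * β ^ 2 - α ^ 3 - α * β ^ 4 - β ^ 3) • x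
  + (1 + 3 * α * β + 3 * α ^ 2 * β ^ 2 - α ^ 3 - α * β ^ 4) • y
  + algebraMap R A (3 * β ^ 2 - β ^ 5 - 2 * α - 3 * α ^ 2 * β + 4 * α * β ^ 3)

theorem map_R0elt {A B : Type*} [Ring A] [Ring B] [Algebra R A] [Algebra R B]
    (f : A →ₐ[R] B) (α β : R) (x y : A) :
    f (R0elt R α β x y) = R0elt R α β (f x) (f y) := by
  simp only [R0elt, map_add, map_mul, map_pow, map_smul, AlgHom.commutes]

inductive KRel (α β : R) (n : ℕ) : CubicHecke R α β n → CubicHecke R α β n → Prop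
  | r0 (j : Fin (n - 1)) (h : (j : ℕ) + 1 < n - 1) :
      KRel α β n (R0elt R α β (hb R α β n j) (hb R α β n ⟨(j : ℕ) + 1, h⟩)) 0

abbrev KAlg (α β : R) (n : ℕ) := RingQuot (KRel R α β n)

noncomputable def towerIncl (α β : R) (n : ℕ) :
    KAlg R α β n →ₐ[R] KAlg R α β (n + 1) :=
  RingQuot.liftAlgHom R
    ⟨(RingQuot.mkAlgHom R (KRel R α β (n + 1))).comp (heckeIncl R α β n),
      by
        rintro x y ⟨j, h⟩
        have hle : n - 1 ≤ n + 1 - 1 := by omega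
        have hlt : ((Fin.castLE hle j : Fin (n + 1 - 1)) : ℕ) + 1 < n + 1 - 1 := by
          simp only [Fin.coe_castLE]; omega
        have e3 : Fin.castLE hle ⟨(j : ℕ) + 1, h⟩
            = (⟨((Fin.castLE hle j : Fin (n + 1 - 1)) : ℕ) + 1, hlt⟩ : Fin (n + 1 - 1)) := by
          ext; simp
        rw [AlgHom.comp_apply, AlgHom.comp_apply, map_R0elt R (heckeIncl R α β n),
          heckeIncl_gen, heckeIncl_gen, e3, map_zero (heckeIncl R α β n)]
        exact RingQuot.mkAlgHom_rel R (KRel.r0 (Fin.castLE hle j) hlt)⟩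

/-- The class of the inverse `b_{i+1}⁻¹` in the cubic Hecke algebra. -/
noncomputable def hbInv (α β : R) (n : ℕ) (i : Fin (n - 1)) : CubicHecke R α β n :=
  RingQuot.mkAlgHom R (cubicRel R α β n)
    (MonoidAlgebra.of R (BraidGroup n) (braidGen n i)⁻¹)

/-- The class of the generator `b_{i+1}` in `K_n(α,β)`. -/
noncomputable def kb (α β : R) (n : ℕ) (i : Fin (n - 1)) : KAlg R α β n :=
  RingQuot.mkAlgHom R (KRel R α β n) (hb R α β n i)

/-- The class of `b_{i+1}⁻¹` in `K_n(α,β)`. -/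
noncomputable def kbInv (α β : R) (n : ℕ) (i : Fin (n - 1)) : KAlg R α β n :=
  RingQuot.mkAlgHom R (KRel R α β n) (hbInv R α β n i)

/-- The iterated tower map `K_n(α,β) → K_{n+k}(α,β)`. -/
noncomputable def towerInclMany (α β : R) (n : ℕ) :
    (k : ℕ) → (KAlg R α β n →ₐ[R] KAlg R α β (n + k))
  | 0 => AlgHom.id R _
  | k + 1 => (towerIncl R α β (n + k)).comp (towerInclMany α β n k)

/-- The class of the generator `b_n` in `K_{n+1}(α,β)` (for `n ≥ 1`). -/
noncomputable def lastGen (α β : R) (n : ℕ) (h : 1 ≤ n) : KAlg R α β (n + 1) :=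
  kb R α β (n + 1) ⟨n - 1, by omega⟩

/-- The class of `b_n⁻¹` in `K_{n+1}(α,β)` (for `n ≥ 1`). -/
noncomputable def lastGenInv (α β : R) (n : ℕ) (h : 1 ≤ n) : KAlg R α β (n + 1) :=
  kbInv R α β (n + 1) ⟨n - 1, by omega⟩

/-- An admissible functional with parameters `(z, z̄)` on the tower of the algebras
`K_n(α,β)`: a compatible family of `R`-linear functionals satisfying the Markov-type
conditions for the last generator and its inverse. -/
structure AdmissibleFunctional (α β z zbar : R) : Type _ where
  T : ∀ n : ℕ, KAlg R α β n →ₗ[R] R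
  compat : ∀ (n : ℕ) (x : KAlg R α β n), T (n + 1) (towerIncl R α β n x) = T n x
  cond_z : ∀ (n : ℕ) (h : 1 ≤ n) (x y : KAlg R α β n),
      T (n + 1) (towerIncl R α β n x * lastGen R α β n h * towerIncl R α β n y)
        = z * T n (x * y)
  cond_zbar : ∀ (n : ℕ) (h : 1 ≤ n) (x y : KAlg R α β n),
      T (n + 1) (towerIncl R α β n x * lastGenInv R α β n h * towerIncl R α β n y)
        = zbar * T n (x * y)

/-- A Markov trace is an admissible functional each of whose components is a trace. -/
def AdmissibleFunctional.IsMarkov {α β z zbar : R}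
    (T : AdmissibleFunctional R α β z zbar) : Prop :=
  ∀ (n : ℕ) (a b : KAlg R α β n), T.T n (a * b) = T.T n (b * a)

/-- A normalized functional takes the value `1` on the unit of `K₁(α,β)`. -/
def AdmissibleFunctional.IsNormalized {α β z zbar : R}
    (T : AdmissibleFunctional R α β z zbar) : Prop :=
  T.T 1 1 = 1


section AuxProof

variable (α β : ℂ)

theorem braidGen_braid' (m : ℕ) (i j : Fin (m - 1)) (hij : (j : ℕ) = (i : ℕ) + 1) :
    braidGen m i * braidGen m j * braidGen m i
      = braidGen m j * braidGen m i * braidGen m j := by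
  have h := braid_mk_eq_one (m := m - 1) (Or.inr ⟨i, j, hij, rfl⟩)
  rw [map_mul, map_inv] at h
  have h2 := mul_inv_eq_one.mp h
  exact h2

theorem braidGen_comm' (m : ℕ) (i j : Fin (m - 1)) (hij : (i : ℕ) + 1 < (j : ℕ)) :
    braidGen m i * braidGen m j = braidGen m j * braidGen m i := by
  have h := braid_mk_eq_one (m := m - 1) (Or.inl ⟨i, j, hij, rfl⟩)
  rw [map_mul, map_inv] at h
  have h2 := mul_inv_eq_one.mp h
  rw [map_mul, map_inv] at h2
  have h3 := mul_inv_eq_iff_eq_mul.mp h2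
  exact h3

noncomputable def kOf (m : ℕ) : BraidGroup m →* KAlg ℂ α β m :=
  (((RingQuot.mkAlgHom ℂ (KRel ℂ α β m)).comp
      (RingQuot.mkAlgHom ℂ (cubicRel ℂ α β m))) :
        MonoidAlgebra ℂ (BraidGroup m) →ₐ[ℂ] KAlg ℂ α β m).toRingHom.toMonoidHom.comp
    (MonoidAlgebra.of ℂ (BraidGroup m))

theorem kOf_gen (m : ℕ) (i : Fin (m - 1)) :
    kOf α β m (braidGen m i) = kb ℂ α β m i := rfl

theorem hb_cubic (m : ℕ) (i : Fin (m - 1)) :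
    hb ℂ α β m i ^ 3 = α • hb ℂ α β m i ^ 2 + β • hb ℂ α β m i + 1 := by
  have h := RingQuot.mkAlgHom_rel ℂ (cubicRel.cube (R := ℂ) (α := α) (β := β) i)
  simpa only [hb, map_pow, map_add, map_smul, map_one] using h

theorem kb_cubic (m : ℕ) (i : Fin (m - 1)) :
    kb ℂ α β m i ^ 3 = α • kb ℂ α β m i ^ 2 + β • kb ℂ α β m i + 1 := by
  have h := congrArg (RingQuot.mkAlgHom ℂ (KRel ℂ α β m)) (hb_cubic α β m i)
  simpa only [kb, map_pow, map_add, map_smul, map_one] using h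

theorem kb_braid (m : ℕ) (i j : Fin (m - 1)) (hij : (j : ℕ) = (i : ℕ) + 1) :
    kb ℂ α β m i * kb ℂ α β m j * kb ℂ α β m i
      = kb ℂ α β m j * kb ℂ α β m i * kb ℂ α β m j := by
  have h := congrArg (kOf α β m) (braidGen_braid' m i j hij)
  simpa only [map_mul, kOf_gen] using h

theorem kb_comm (m : ℕ) (i j : Fin (m - 1)) (hij : (i : ℕ) + 1 < (j : ℕ)) :
    Commute (kb ℂ α β m i) (kb ℂ α β m j) := by
  have h := congrArg (kOf α β m) (braidGen_comm' m i j hij)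
  simpa only [map_mul, kOf_gen, commute_iff_eq] using h

theorem cubic_invPoly {A : Type*} [Ring A] [Algebra ℂ A] (α β : ℂ) (x : A)
    (h : x ^ 3 = α • x ^ 2 + β • x + 1) :
    x * (x ^ 2 - α • x - β • 1) = 1 ∧ (x ^ 2 - α • x - β • 1) * x = 1 := by
  constructor
  · rw [mul_sub, mul_sub, mul_smul_comm, mul_smul_comm, mul_one, ← pow_two,
      show x * x ^ 2 = x ^ 3 by rw [← pow_succ'], h]
    abel
  · rw [sub_mul, sub_mul, smul_mul_assoc, smul_mul_assoc, one_mul, ← pow_two,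
      show x ^ 2 * x = x ^ 3 by rw [← pow_succ], h]
    abel

set_option maxHeartbeats 1000000 in
theorem kOf_mem (m : ℕ) (g : BraidGroup m) :
    kOf α β m g ∈ Algebra.adjoin ℂ (Set.range (kb ℂ α β m)) := by
  induction g using QuotientGroup.induction_on with
  | H z =>
    induction z using FreeGroup.induction_on with
    | C1 =>
      convert one_mem (Algebra.adjoin ℂ (Set.range (kb ℂ α β m))) using 1
      exact map_one _
    | of x =>
      rw [show (QuotientGroup.mk (FreeGroup.of x) : BraidGroup m) = braidGen m x from rfl,
        kOf_gen]
      exact Algebra.subset_adjoin ⟨x, rfl⟩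
    | inv_of x _ =>
      rw [show (QuotientGroup.mk ((FreeGroup.of x)⁻¹) : BraidGroup m)
          = (braidGen m x)⁻¹ from rfl]
      set u := kOf α β m ((braidGen m x)⁻¹) with hu0
      have hu : u * kb ℂ α β m x = 1 := by
        rw [hu0, ← kOf_gen α β m x, ← map_mul, inv_mul_cancel, map_one]
      have hpoly : kb ℂ α β m x * (kb ℂ α β m x ^ 2 - α • kb ℂ α β m x - β • 1) = 1 :=
        (cubic_invPoly α β (kb ℂ α β m x) (kb_cubic α β m x)).1
      have hinv : u = kb ℂ α β m x ^ 2 - α • kb ℂ α β m x - β • 1 := by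
        calc u = u * (kb ℂ α β m x * (kb ℂ α β m x ^ 2 - α • kb ℂ α β m x - β • 1)) := by
              rw [hpoly, mul_one]
          _ = (u * kb ℂ α β m x) * (kb ℂ α β m x ^ 2 - α • kb ℂ α β m x - β • 1) := by
              rw [mul_assoc]
          _ = _ := by rw [hu, one_mul]
      rw [hinv]
      have hxmem : kb ℂ α β m x ∈ Algebra.adjoin ℂ (Set.range (kb ℂ α β m)) :=
        Algebra.subset_adjoin ⟨x, rfl⟩
      have h2m : kb ℂ α β m x ^ 2 ∈ Algebra.adjoin ℂ (Set.range (kb ℂ α β m)) :=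
        Subalgebra.pow_mem _ hxmem 2
      have ham : α • kb ℂ α β m x ∈ Algebra.adjoin ℂ (Set.range (kb ℂ α β m)) :=
        Subalgebra.smul_mem _ hxmem α
      have hbm : β • (1 : KAlg ℂ α β m) ∈ Algebra.adjoin ℂ (Set.range (kb ℂ α β m)) :=
        Subalgebra.smul_mem _ (Subalgebra.one_mem _) β
      exact Subalgebra.sub_mem (Algebra.adjoin ℂ (Set.range (kb ℂ α β m)))
        (Subalgebra.sub_mem (Algebra.adjoin ℂ (Set.range (kb ℂ α β m))) h2m ham) hbm
    | mul a b ha hb =>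
      rw [show (QuotientGroup.mk (a * b) : BraidGroup m)
          = QuotientGroup.mk a * QuotientGroup.mk b from rfl]
      exact (map_mul (kOf α β m) (QuotientGroup.mk a) (QuotientGroup.mk b)) ▸ mul_mem ha hb

theorem mem_adjoin_kb (m : ℕ) (w : KAlg ℂ α β m) :
    w ∈ Algebra.adjoin ℂ (Set.range (kb ℂ α β m)) := by
  obtain ⟨p, rfl⟩ := RingQuot.mkAlgHom_surjective ℂ (KRel ℂ α β m) w
  obtain ⟨q, rfl⟩ := RingQuot.mkAlgHom_surjective ℂ (cubicRel ℂ α β m) p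
  induction q using MonoidAlgebra.induction_on with
  | of g => exact kOf_mem α β m g
  | add f g hf hg =>
    rw [map_add, map_add]
    exact add_mem hf hg
  | smul r f hf =>
    rw [map_smul, map_smul]
    exact Subalgebra.smul_mem _ hf r

theorem towerIncl_kb (m : ℕ) (i : Fin (m - 1)) :
    towerIncl ℂ α β m (kb ℂ α β m i)
      = kb ℂ α β (m + 1) (Fin.castLE (by omega) i) := by
  rw [kb, towerIncl, RingQuot.liftAlgHom_mkAlgHom_apply, AlgHom.comp_apply, heckeIncl_gen]
  rfl

theorem R0_zero (m : ℕ) (j : Fin (m - 1)) (h : (j : ℕ) + 1 < m - 1) :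
    R0elt ℂ α β (kb ℂ α β m j) (kb ℂ α β m ⟨(j : ℕ) + 1, h⟩) = 0 := by
  have h1 := RingQuot.mkAlgHom_rel ℂ (KRel.r0 (R := ℂ) (α := α) (β := β) j h)
  rw [map_zero] at h1
  have h2 := map_R0elt ℂ (A := CubicHecke ℂ α β m) (B := KAlg ℂ α β m)
    (RingQuot.mkAlgHom ℂ (KRel ℂ α β m)) α β
    (hb ℂ α β m j) (hb ℂ α β m ⟨(j : ℕ) + 1, h⟩)
  rw [h2] at h1
  exact h1

theorem rearrange5 {A' : Type*} [Ring A'] (yy Xf a b u v : A')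
    (h1 : a * yy = yy * a) (h2 : b * u = u * b) :
    yy * (a * Xf * b * u * v) = a * (yy * Xf * u * (b * v)) := by
  calc yy * (a * Xf * b * u * v)
      = (yy * a) * (Xf * (b * u) * v) := by simp only [mul_assoc]
    _ = (a * yy) * (Xf * (u * b) * v) := by rw [← h1, h2]
    _ = a * (yy * Xf * u * (b * v)) := by simp only [mul_assoc]

set_option maxHeartbeats 1000000 in
theorem key_word_mem (α β : ℂ) {A : Type*} [Ring A] [Algebra ℂ A] (S : Submodule ℂ A)
    (X y : A)
    (hW : ∀ i e k' : ℕ, e ≤ 2 → X ^ i * y ^ e * X ^ k' ∈ S)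
    (hycube : y ^ 3 = α • y ^ 2 + β • y + 1)
    (hXcube : X ^ 3 = α • X ^ 2 + β • X + 1)
    (hbraid : y * X * y = X * y * X)
    (hR0 : R0elt ℂ α β X y = 0) :
    ∀ f e : ℕ, f ≤ 2 → e ≤ 2 → y * X ^ f * y ^ e ∈ S := by
  have hyinv := cubic_invPoly (A := A) α β y hycube
  have hXinv := cubic_invPoly (A := A) α β X hXcube
  -- basic memberships
  have w222 : X ^ 2 * y ^ 2 * X ^ 2 ∈ S := hW 2 2 2 (by omega)
  have w122 : X * y ^ 2 * X ^ 2 ∈ S := by simpa using hW 1 2 2 (by omega)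
  have w221 : X ^ 2 * y ^ 2 * X ∈ S := by simpa using hW 2 2 1 (by omega)
  have w212 : X ^ 2 * y * X ^ 2 ∈ S := by simpa using hW 2 1 2 (by omega)
  have w121 : X * y ^ 2 * X ∈ S := by simpa using hW 1 2 1 (by omega)
  have w112 : X * y * X ^ 2 ∈ S := by simpa using hW 1 1 2 (by omega)
  have w211 : X ^ 2 * y * X ∈ S := by simpa using hW 2 1 1 (by omega)
  have w022 : y ^ 2 * X ^ 2 ∈ S := by simpa using hW 0 2 2 (by omega)
  have w220 : X ^ 2 * y ^ 2 ∈ S := by simpa using hW 2 2 0 (by omega)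
  have w012 : y * X ^ 2 ∈ S := by simpa using hW 0 1 2 (by omega)
  have w210 : X ^ 2 * y ∈ S := by simpa using hW 2 1 0 (by omega)
  have w021 : y ^ 2 * X ∈ S := by simpa using hW 0 2 1 (by omega)
  have w120 : X * y ^ 2 ∈ S := by simpa using hW 1 2 0 (by omega)
  have w111 : X * y * X ∈ S := by simpa using hW 1 1 1 (by omega)
  have w011 : y * X ∈ S := by simpa using hW 0 1 1 (by omega)
  have w110 : X * y ∈ S := by simpa using hW 1 1 0 (by omega)
  have w200 : X ^ 2 ∈ S := by simpa using hW 2 0 0 (by omega)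
  have w020 : y ^ 2 ∈ S := by simpa using hW 0 2 0 (by omega)
  have w100 : X ∈ S := by simpa using hW 1 0 0 (by omega)
  have w010 : y ∈ S := by simpa using hW 0 1 0 (by omega)
  have h1S : (1 : A) ∈ S := by simpa using hW 0 0 0 (by omega)
  -- the R0 relation rewritten
  have hsplit : y * X ^ 2 * y
      + ((β ^ 2 - α) • (X ^ 2 * y ^ 2 * X ^ 2)
      + (α ^ 2 - α * β ^ 2 - β) • (X * y ^ 2 * X ^ 2 + X ^ 2 * y ^ 2 * X)
      + (α ^ 2 - α * β ^ 2) • (X ^ 2 * y * X ^ 2)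
      + (1 + 2 * α * β + α ^ 2 * β ^ 2 - α ^ 3) • (X * y ^ 2 * X)
      + (1 + α * β + α ^ 2 * β ^ 2 - α ^ 3) • (X * y * X ^ 2 + X ^ 2 * y * X)
      + (1 + 2 * α * β - β ^ 3) • (y ^ 2 * X ^ 2 + X ^ 2 * y ^ 2)
      + (α * β ^ 3 - 2 * α - 2 * α ^ 2 * β) • (y * X ^ 2 + X ^ 2 * y)
      + (α * β ^ 3 - 2 * α - 2 * α ^ 2 * β + β ^ 2) • (y ^ 2 * X + X * y ^ 2)
      + (α ^ 4 - α ^ 3 * β ^ 2 - 2 * α ^ 2 * β - 3 * α) • (X * y * X)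
      + (2 * α ^ 3 * β + 3 * α ^ 2 - α ^ 2 * β ^ 3 - α * β ^ 2) • (y * X + X * y)
      + (β ^ 4 - 2 * β - 3 * α * β ^ 2 + α ^ 2) • (X ^ 2 + y ^ 2)
      + (1 + 4 * α * β + 3 * α ^ 2 * β ^ 2 - α ^ 3 - α * β ^ 4 - β ^ 3) • X
      + (1 + 3 * α * β + 3 * α ^ 2 * β ^ 2 - α ^ 3 - α * β ^ 4) • y
      + algebraMap ℂ A (3 * β ^ 2 - β ^ 5 - 2 * α - 3 * α ^ 2 * β + 4 * α * β ^ 3)) = 0 := by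
    rw [← hR0, R0elt]
    abel
  have halgS : algebraMap ℂ A (3 * β ^ 2 - β ^ 5 - 2 * α - 3 * α ^ 2 * β + 4 * α * β ^ 3) ∈ S := by
    rw [Algebra.algebraMap_eq_smul_one]
    exact S.smul_mem _ h1S
  have hT : ((β ^ 2 - α) • (X ^ 2 * y ^ 2 * X ^ 2)
      + (α ^ 2 - α * β ^ 2 - β) • (X * y ^ 2 * X ^ 2 + X ^ 2 * y ^ 2 * X)
      + (α ^ 2 - α * β ^ 2) • (X ^ 2 * y * X ^ 2)
      + (1 + 2 * α * β + α ^ 2 * β ^ 2 - α ^ 3) • (X * y ^ 2 * X)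
      + (1 + α * β + α ^ 2 * β ^ 2 - α ^ 3) • (X * y * X ^ 2 + X ^ 2 * y * X)
      + (1 + 2 * α * β - β ^ 3) • (y ^ 2 * X ^ 2 + X ^ 2 * y ^ 2)
      + (α * β ^ 3 - 2 * α - 2 * α ^ 2 * β) • (y * X ^ 2 + X ^ 2 * y)
      + (α * β ^ 3 - 2 * α - 2 * α ^ 2 * β + β ^ 2) • (y ^ 2 * X + X * y ^ 2)
      + (α ^ 4 - α ^ 3 * β ^ 2 - 2 * α ^ 2 * β - 3 * α) • (X * y * X)
      + (2 * α ^ 3 * β + 3 * α ^ 2 - α ^ 2 * β ^ 3 - α * β ^ 2) • (y * X + X * y)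
      + (β ^ 4 - 2 * β - 3 * α * β ^ 2 + α ^ 2) • (X ^ 2 + y ^ 2)
      + (1 + 4 * α * β + 3 * α ^ 2 * β ^ 2 - α ^ 3 - α * β ^ 4 - β ^ 3) • X
      + (1 + 3 * α * β + 3 * α ^ 2 * β ^ 2 - α ^ 3 - α * β ^ 4) • y
      + algebraMap ℂ A (3 * β ^ 2 - β ^ 5 - 2 * α - 3 * α ^ 2 * β + 4 * α * β ^ 3)) ∈ S :=
    S.add_mem (S.add_mem (S.add_mem (S.add_mem (S.add_mem (S.add_mem (S.add_mem (S.add_mem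
      (S.add_mem (S.add_mem (S.add_mem (S.add_mem (S.add_mem
      (S.smul_mem _ w222)
      (S.smul_mem _ (S.add_mem w122 w221)))
      (S.smul_mem _ w212))
      (S.smul_mem _ w121))
      (S.smul_mem _ (S.add_mem w112 w211)))
      (S.smul_mem _ (S.add_mem w022 w220)))
      (S.smul_mem _ (S.add_mem w012 w210)))
      (S.smul_mem _ (S.add_mem w021 w120)))
      (S.smul_mem _ w111))
      (S.smul_mem _ (S.add_mem w011 w110)))
      (S.smul_mem _ (S.add_mem w200 w020)))
      (S.smul_mem _ w100))
      (S.smul_mem _ w010))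
      halgS
  have hyX2y : y * X ^ 2 * y ∈ S := by
    rw [eq_neg_of_add_eq_zero_left hsplit]
    exact S.neg_mem hT
  -- conjugation identities
  have conj1 : y * X * (y ^ 2 - α • y - β • 1) = (X ^ 2 - α • X - β • 1) * y * X := by
    have lhs : (X ^ 2 - α • X - β • 1) * (y * X * y) * (y ^ 2 - α • y - β • 1)
        = (X ^ 2 - α • X - β • 1) * (y * X) := by
      simp only [mul_assoc]
      rw [hyinv.1, mul_one]
    have rhs : (X ^ 2 - α • X - β • 1) * (X * y * X) * (y ^ 2 - α • y - β • 1)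
        = y * X * (y ^ 2 - α • y - β • 1) := by
      simp only [mul_assoc]
      rw [← mul_assoc (X ^ 2 - α • X - β • 1) X, hXinv.2, one_mul]
    rw [← rhs, ← hbraid, lhs, ← mul_assoc]
  have conj2 : y * X ^ 2 * (y ^ 2 - α • y - β • 1)
      = (X ^ 2 - α • X - β • 1) * y ^ 2 * X := by
    have h1 : y * X ^ 2 * (y ^ 2 - α • y - β • 1)
        = (y * X * (y ^ 2 - α • y - β • 1)) * (y * (X * (y ^ 2 - α • y - β • 1))) := by
      calc y * X ^ 2 * (y ^ 2 - α • y - β • 1)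
          = y * (X * X) * (y ^ 2 - α • y - β • 1) := by rw [pow_two X]
        _ = (y * X) * (((y ^ 2 - α • y - β • 1) * y) * (X * (y ^ 2 - α • y - β • 1))) := by
            rw [hyinv.2, one_mul]
            simp only [mul_assoc]
        _ = _ := by simp only [mul_assoc]
    rw [h1, conj1]
    calc ((X ^ 2 - α • X - β • 1) * y * X) * (y * (X * (y ^ 2 - α • y - β • 1)))
        = ((X ^ 2 - α • X - β • 1) * y * X) * ((X ^ 2 - α • X - β • 1) * y * X) := by
          rw [show y * (X * (y ^ 2 - α • y - β • 1)) = (X ^ 2 - α • X - β • 1) * y * X by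
            rw [← conj1]; simp only [mul_assoc]]
      _ = (X ^ 2 - α • X - β • 1) * (y * ((X * (X ^ 2 - α • X - β • 1)) * (y * X))) := by
          simp only [mul_assoc]
      _ = (X ^ 2 - α • X - β • 1) * y ^ 2 * X := by
          rw [hXinv.1, one_mul, pow_two y]
          simp only [mul_assoc]
  have hysq : α • y + β • (1 : A) + (y ^ 2 - α • y - β • 1) = y ^ 2 := by abel
  intro f e hf he
  interval_cases f <;> interval_cases e
  · simpa using w010
  · simpa [pow_two] using w020
  · have h3 : y * X ^ 0 * y ^ 2 = α • y ^ 2 + β • y + 1 := by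
      rw [pow_zero, mul_one, show y * y ^ 2 = y ^ 3 from (pow_succ' y 2).symm, hycube]
    rw [h3]
    exact S.add_mem (S.add_mem (S.smul_mem _ w020) (S.smul_mem _ w010)) h1S
  · simpa using w011
  · simp only [pow_one]
    rw [hbraid]
    exact w111
  · simp only [pow_one]
    have hstep : y * X * y ^ 2 = α • (X * y * X) + β • (y * X)
        + (X ^ 2 * y * X - α • (X * y * X) - β • (y * X)) := by
      calc y * X * y ^ 2
          = y * X * (α • y + β • 1 + (y ^ 2 - α • y - β • 1)) := by rw [hysq]
        _ = α • (y * X * y) + β • (y * X) + y * X * (y ^ 2 - α • y - β • 1) := by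
            rw [mul_add, mul_add, mul_smul_comm, mul_smul_comm, mul_one]
        _ = α • (X * y * X) + β • (y * X) + (X ^ 2 - α • X - β • 1) * y * X := by
            rw [hbraid, conj1]
        _ = _ := by simp only [sub_mul, smul_mul_assoc, one_mul]
    rw [hstep]
    exact S.add_mem (S.add_mem (S.smul_mem _ w111) (S.smul_mem _ w011))
      (S.sub_mem (S.sub_mem w211 (S.smul_mem _ w111)) (S.smul_mem _ w011))
  · simpa using w012
  · simp only [pow_one]
    exact hyX2y
  · have hstep : y * X ^ 2 * y ^ 2 = α • (y * X ^ 2 * y) + β • (y * X ^ 2)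
        + (X ^ 2 * y ^ 2 * X - α • (X * y ^ 2 * X) - β • (y ^ 2 * X)) := by
      calc y * X ^ 2 * y ^ 2
          = y * X ^ 2 * (α • y + β • 1 + (y ^ 2 - α • y - β • 1)) := by rw [hysq]
        _ = α • (y * X ^ 2 * y) + β • (y * X ^ 2) + y * X ^ 2 * (y ^ 2 - α • y - β • 1) := by
            rw [mul_add, mul_add, mul_smul_comm, mul_smul_comm, mul_one]
        _ = α • (y * X ^ 2 * y) + β • (y * X ^ 2)
            + (X ^ 2 - α • X - β • 1) * y ^ 2 * X := by rw [conj2]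
        _ = _ := by simp only [sub_mul, smul_mul_assoc, one_mul]
    rw [hstep]
    exact S.add_mem (S.add_mem (S.smul_mem _ hyX2y) (S.smul_mem _ w012))
      (S.sub_mem (S.sub_mem w221 (S.smul_mem _ w121)) (S.smul_mem _ w021))

noncomputable abbrev SP (α β : ℂ) (n : ℕ) (hn : 1 ≤ n) : Submodule ℂ (KAlg ℂ α β (n + 1)) :=
  Submodule.span ℂ
    { w' : KAlg ℂ α β (n + 1) | ∃ (a b : KAlg ℂ α β n) (e : ℕ), e ≤ 2 ∧
        w' = towerIncl ℂ α β n a * lastGen ℂ α β n hn ^ e * towerIncl ℂ α β n b }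

set_option maxHeartbeats 2000000 in
theorem main_aux (α β : ℂ) (n : ℕ) : ∀ (hn : 1 ≤ n) (w : KAlg ℂ α β (n + 1)),
    w ∈ SP α β n hn := by
  induction n with
  | zero => intro hn _; exact absurd hn (by omega)
  | succ k ih =>
    intro hn w
    have hy : lastGen ℂ α β (k + 1) hn = kb ℂ α β (k + 2) ⟨k, by omega⟩ := rfl
    have memS : ∀ (a b : KAlg ℂ α β (k + 1)) (e : ℕ), e ≤ 2 →
        towerIncl ℂ α β (k + 1) a * lastGen ℂ α β (k + 1) hn ^ e * towerIncl ℂ α β (k + 1) b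
          ∈ SP α β (k + 1) hn :=
      fun a b e he => Submodule.subset_span ⟨a, b, e, he, rfl⟩
    have one_mem_S : (1 : KAlg ℂ α β (k + 2)) ∈ SP α β (k + 1) hn := by
      simpa using memS 1 1 0 (by omega)
    have ycubic : lastGen ℂ α β (k + 1) hn ^ 3
        = α • lastGen ℂ α β (k + 1) hn ^ 2 + β • lastGen ℂ α β (k + 1) hn + 1 := by
      rw [hy]; exact kb_cubic α β (k + 2) ⟨k, by omega⟩
    have memS3 : ∀ (a b : KAlg ℂ α β (k + 1)) (e : ℕ), e ≤ 3 →
        towerIncl ℂ α β (k + 1) a * lastGen ℂ α β (k + 1) hn ^ e * towerIncl ℂ α β (k + 1) b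
          ∈ SP α β (k + 1) hn := by
      intro a b e he
      rcases Nat.lt_or_ge e 3 with h3 | h3
      · exact memS a b e (by omega)
      · have he3 : e = 3 := by omega
        subst he3
        have h1 : towerIncl ℂ α β (k + 1) a * lastGen ℂ α β (k + 1) hn ^ 3
              * towerIncl ℂ α β (k + 1) b
            = α • (towerIncl ℂ α β (k + 1) a * lastGen ℂ α β (k + 1) hn ^ 2
                * towerIncl ℂ α β (k + 1) b)
              + β • (towerIncl ℂ α β (k + 1) a * lastGen ℂ α β (k + 1) hn ^ 1
                * towerIncl ℂ α β (k + 1) b)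
              + towerIncl ℂ α β (k + 1) (a * b) * lastGen ℂ α β (k + 1) hn ^ 0
                * towerIncl ℂ α β (k + 1) 1 := by
          rw [ycubic]
          simp only [mul_add, add_mul, mul_smul_comm, smul_mul_assoc, mul_one, one_mul,
            map_mul, map_one, pow_one, pow_zero]
        rw [h1]
        exact Submodule.add_mem _ (Submodule.add_mem _
          (Submodule.smul_mem _ _ (memS a b 2 (by omega)))
          (Submodule.smul_mem _ _ (memS a b 1 (by omega)))) (memS (a * b) 1 0 (by omega))
    have spanL : ∀ (c : KAlg ℂ α β (k + 1)) (s : KAlg ℂ α β (k + 2)),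
        s ∈ SP α β (k + 1) hn → towerIncl ℂ α β (k + 1) c * s ∈ SP α β (k + 1) hn := by
      intro c s hs
      refine Submodule.span_induction ?_ ?_ ?_ ?_ hs
      · rintro t ⟨a, b, e, he, rfl⟩
        have : towerIncl ℂ α β (k + 1) c * (towerIncl ℂ α β (k + 1) a
              * lastGen ℂ α β (k + 1) hn ^ e * towerIncl ℂ α β (k + 1) b)
            = towerIncl ℂ α β (k + 1) (c * a) * lastGen ℂ α β (k + 1) hn ^ e
              * towerIncl ℂ α β (k + 1) b := by
          simp only [map_mul, mul_assoc]
        rw [this]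
        exact memS (c * a) b e he
      · rw [mul_zero]; exact Submodule.zero_mem _
      · intro u v _ _ hu hv; rw [mul_add]; exact Submodule.add_mem _ hu hv
      · intro r u _ hu; rw [mul_smul_comm]; exact Submodule.smul_mem _ r hu
    have spanR : ∀ (c : KAlg ℂ α β (k + 1)) (s : KAlg ℂ α β (k + 2)),
        s ∈ SP α β (k + 1) hn → s * towerIncl ℂ α β (k + 1) c ∈ SP α β (k + 1) hn := by
      intro c s hs
      refine Submodule.span_induction ?_ ?_ ?_ ?_ hs
      · rintro t ⟨a, b, e, he, rfl⟩
        have : towerIncl ℂ α β (k + 1) a * lastGen ℂ α β (k + 1) hn ^ e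
              * towerIncl ℂ α β (k + 1) b * towerIncl ℂ α β (k + 1) c
            = towerIncl ℂ α β (k + 1) a * lastGen ℂ α β (k + 1) hn ^ e
              * towerIncl ℂ α β (k + 1) (b * c) := by
          simp only [map_mul, mul_assoc]
        rw [this]
        exact memS a (b * c) e he
      · rw [zero_mul]; exact Submodule.zero_mem _
      · intro u v _ _ hu hv; rw [add_mul]; exact Submodule.add_mem _ hu hv
      · intro r u _ hu; rw [smul_mul_assoc]; exact Submodule.smul_mem _ r hu
    have mulY : ∀ s : KAlg ℂ α β (k + 2), s ∈ SP α β (k + 1) hn →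
        lastGen ℂ α β (k + 1) hn * s ∈ SP α β (k + 1) hn := by
      intro s hs
      refine Submodule.span_induction ?_ ?_ ?_ ?_ hs
      · rintro t ⟨a, b, e, he, rfl⟩
        -- goal: y * (ι a * y^e * ι b) ∈ SP
        rcases Nat.eq_zero_or_pos k with rfl | hk
        · -- base case k = 0 : a is a scalar
          have ha := mem_adjoin_kb α β 1 a
          haveI : IsEmpty (Fin (1 - 1)) := ⟨fun i => absurd i.isLt (by omega)⟩
          rw [Set.range_eq_empty (kb ℂ α β 1), Algebra.adjoin_empty] at ha
          obtain ⟨c, hc⟩ := Algebra.mem_bot.mp ha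
          have heq : lastGen ℂ α β 1 hn * (towerIncl ℂ α β 1 a
                * lastGen ℂ α β 1 hn ^ e * towerIncl ℂ α β 1 b)
              = c • (towerIncl ℂ α β 1 1 * lastGen ℂ α β 1 hn ^ (e + 1)
                * towerIncl ℂ α β 1 b) := by
            rw [← hc, AlgHom.commutes, map_one, one_mul, ← Algebra.smul_def]
            simp only [smul_mul_assoc, mul_smul_comm, ← mul_assoc, ← pow_succ']
          rw [heq]
          exact Submodule.smul_mem _ c (memS3 1 b (e + 1) (by omega))
        · -- inductive case k ≥ 1
          have hXx : towerIncl ℂ α β (k + 1) (towerIncl ℂ α β k (1 : KAlg ℂ α β k)) = 1 := by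
            rw [map_one, map_one]
          have hX : towerIncl ℂ α β (k + 1) (lastGen ℂ α β k hk)
              = kb ℂ α β (k + 2) ⟨k - 1, by omega⟩ := by
            rw [show lastGen ℂ α β k hk = kb ℂ α β (k + 1) ⟨k - 1, by omega⟩ from rfl,
              towerIncl_kb]
            congr 1
          have hbraid : lastGen ℂ α β (k + 1) hn * kb ℂ α β (k + 2) ⟨k - 1, by omega⟩
                * lastGen ℂ α β (k + 1) hn
              = kb ℂ α β (k + 2) ⟨k - 1, by omega⟩ * lastGen ℂ α β (k + 1) hn
                * kb ℂ α β (k + 2) ⟨k - 1, by omega⟩ := by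
            rw [hy]
            exact (kb_braid α β (k + 2) ⟨k - 1, by omega⟩ ⟨k, by omega⟩
              (by simp; omega)).symm
          have hR0 : R0elt ℂ α β (kb ℂ α β (k + 2) ⟨k - 1, by omega⟩)
              (lastGen ℂ α β (k + 1) hn) = 0 := by
            have h0 := R0_zero α β (k + 2) ⟨k - 1, by omega⟩ (by simp; omega)
            rw [hy]
            convert h0 using 3
            · exact Fin.ext (by simp; omega)
          have comm : ∀ c : KAlg ℂ α β k,
              Commute (towerIncl ℂ α β (k + 1) (towerIncl ℂ α β k c))
                (lastGen ℂ α β (k + 1) hn) := by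
            intro c
            have hc := mem_adjoin_kb α β k c
            refine Algebra.adjoin_induction ?_ ?_ ?_ ?_ hc
            · rintro z ⟨j, rfl⟩
              rw [towerIncl_kb, towerIncl_kb, hy]
              exact kb_comm α β (k + 2) _ _ (by simp; omega)
            · intro r
              rw [AlgHom.commutes, AlgHom.commutes]
              exact Algebra.commutes r _
            · intro u v _ _ hu hv
              rw [map_add, map_add]
              exact hu.add_left hv
            · intro u v _ _ hu hv
              rw [map_mul, map_mul]
              exact hu.mul_left hv
          have hW : ∀ i e' k' : ℕ, e' ≤ 2 →
              kb ℂ α β (k + 2) ⟨k - 1, by omega⟩ ^ i * lastGen ℂ α β (k + 1) hn ^ e'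
                * kb ℂ α β (k + 2) ⟨k - 1, by omega⟩ ^ k' ∈ SP α β (k + 1) hn := by
            intro i e' k' he'
            have h1 := memS (lastGen ℂ α β k hk ^ i) (lastGen ℂ α β k hk ^ k') e' he'
            rw [map_pow, map_pow, hX] at h1
            exact h1
          have keyf := key_word_mem α β (SP α β (k + 1) hn)
            (kb ℂ α β (k + 2) ⟨k - 1, by omega⟩) (lastGen ℂ α β (k + 1) hn) hW
            ycubic (kb_cubic α β (k + 2) ⟨k - 1, by omega⟩) hbraid hR0
          -- decompose a by the induction hypothesis
          have hdecomp := ih hk a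
          refine Submodule.span_induction ?_ ?_ ?_ ?_ hdecomp
          · rintro t ⟨a', b', f, hf, rfl⟩
            have expand : towerIncl ℂ α β (k + 1)
                  (towerIncl ℂ α β k a' * lastGen ℂ α β k hk ^ f * towerIncl ℂ α β k b')
                = towerIncl ℂ α β (k + 1) (towerIncl ℂ α β k a')
                  * kb ℂ α β (k + 2) ⟨k - 1, by omega⟩ ^ f
                  * towerIncl ℂ α β (k + 1) (towerIncl ℂ α β k b') := by
              rw [map_mul, map_mul, map_pow, hX]
            rw [expand]
            have hre := rearrange5 (lastGen ℂ α β (k + 1) hn)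
              (kb ℂ α β (k + 2) ⟨k - 1, by omega⟩ ^ f)
              (towerIncl ℂ α β (k + 1) (towerIncl ℂ α β k a'))
              (towerIncl ℂ α β (k + 1) (towerIncl ℂ α β k b'))
              (lastGen ℂ α β (k + 1) hn ^ e) (towerIncl ℂ α β (k + 1) b)
              (comm a').eq ((comm b').pow_right e).eq
            rw [hre, ← map_mul]
            exact spanL (towerIncl ℂ α β k a') _
              (spanR (towerIncl ℂ α β k b' * b) _ (keyf f e hf he))
          · rw [map_zero, zero_mul, zero_mul, mul_zero]; exact Submodule.zero_mem _
          · intro u v _ _ hu hv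
            rw [map_add, add_mul, add_mul, mul_add]
            exact Submodule.add_mem _ hu hv
          · intro r u _ hu
            rw [map_smul, smul_mul_assoc, smul_mul_assoc, mul_smul_comm]
            exact Submodule.smul_mem _ r hu
      · rw [mul_zero]; exact Submodule.zero_mem _
      · intro u v _ _ hu hv; rw [mul_add]; exact Submodule.add_mem _ hu hv
      · intro r u _ hu; rw [mul_smul_comm]; exact Submodule.smul_mem _ r hu
    have mulMem : ∀ u : KAlg ℂ α β (k + 2), ∀ s, s ∈ SP α β (k + 1) hn →
        u * s ∈ SP α β (k + 1) hn := by
      intro u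
      have hu := mem_adjoin_kb α β (k + 2) u
      refine Algebra.adjoin_induction ?_ ?_ ?_ ?_ hu
      · rintro z ⟨i, rfl⟩
        by_cases hik : (i : ℕ) < k
        · have hi : kb ℂ α β (k + 2) i
              = towerIncl ℂ α β (k + 1) (kb ℂ α β (k + 1) ⟨(i : ℕ), by omega⟩) := by
            rw [towerIncl_kb]
            congr 1
          rw [hi]
          exact fun s hs => spanL _ s hs
        · have hik2 : (i : ℕ) = k := by
            have := i.isLt
            omega
          have hi : kb ℂ α β (k + 2) i = lastGen ℂ α β (k + 1) hn := by
            rw [hy]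
            congr 1
            exact Fin.ext (by simp [hik2])
          rw [hi]
          exact mulY
      · intro r s hs
        rw [← Algebra.smul_def]
        exact Submodule.smul_mem _ r hs
      · intro u v _ _ hu hv s hs
        rw [add_mul]
        exact Submodule.add_mem _ (hu s hs) (hv s hs)
      · intro u v _ _ hu hv s hs
        rw [mul_assoc]
        exact hu _ (hv s hs)
    have := mulMem w 1 one_mem_S
    simpa using this

end AuxProof


/-- Every element of `K_{n+1}(α,β)` is a finite `ℂ`-linear combination of elements
`ι(a)·b_nᵉ·ι(b)` with `a, b ∈ K_n(α,β)` and `ε ∈ {0,1,2}`. -/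
theorem statement_7 (α β : ℂ) (n : ℕ) (hn : 1 ≤ n) (w : KAlg ℂ α β (n + 1)) :
    w ∈ Submodule.span ℂ
      { w' : KAlg ℂ α β (n + 1) | ∃ (a b : KAlg ℂ α β n) (e : ℕ), e ≤ 2 ∧
          w' = towerIncl ℂ α β n a * lastGen ℂ α β n hn ^ e * towerIncl ℂ α β n b } := by
  exact main_aux α β n hn w
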